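/- For partitions μ ⊆ λ and an integer f, either T_{λ/μ}(f,0) < 0 or T_{λ/μ}(f,0) = f - H(λ/μ) ≥ 0, where H(λ/μ) is the height of λ/μ. -/
import Mathlib


/-- A partition: a weakly decreasing sequence of naturals, eventually zero
(finite support). `parts i` is the (i+1)-st part (0-indexed). -/
structure NatPartition where
  parts : ℕ →₀ ℕ
  antitone : ∀ ⦃i j : ℕ⦄, i ≤ j → parts j ≤ parts i

namespace NatPartition

/-- The weight `|λ|` of a partition: the sum of its parts. -/
def weight (l : NatPartition) : ℕ := l.parts.sum fun _ n => n

/-- The (i+1)-st part of the conjugate partition: the number of indices `j`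
with `parts j ≥ i + 1`. -/
def conj (l : NatPartition) (i : ℕ) : ℕ :=
  (l.parts.support.filter fun j => i + 1 ≤ l.parts j).card

end NatPartition

open NatPartition

/-- The (i+1)-st part of `ν''(λ,μ,n)`, namely `min (λ_i, max (μ_i, μ_i + n))`. -/
def nuppParts (lam mu : NatPartition) (n : ℤ) (i : ℕ) : ℕ :=
  min (lam.parts i) ((max ((mu.parts i : ℤ)) ((mu.parts i : ℤ) + n)).toNat)

/-- The weight `|ν''(λ,μ,n)|`. -/
def nuppWeight (lam mu : NatPartition) (n : ℤ) : ℕ :=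
  ∑ i ∈ lam.parts.support, nuppParts lam mu n i

/-- The (i+1)-st part of the conjugate of `ν'(λ,μ,n)`, namely
`max (μ̃_i, min (λ̃_i, λ̃_i - n))`. -/
def nupConj (lam mu : NatPartition) (n : ℤ) (i : ℕ) : ℕ :=
  (max ((mu.conj i : ℤ)) (min ((lam.conj i : ℤ)) ((lam.conj i : ℤ) - n))).toNat

/-- The (i+1)-st part of `ν'(λ,μ,n)`, obtained by conjugating back. -/
def nupParts (lam mu : NatPartition) (n : ℤ) (i : ℕ) : ℕ :=
  ((Finset.range (lam.parts 0)).filter fun t => i + 1 ≤ nupConj lam mu n t).card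

/-- The weight `|ν'(λ,μ,n)|` (computed as the sum of the parts of its conjugate). -/
def nupWeight (lam mu : NatPartition) (n : ℤ) : ℕ :=
  ∑ i ∈ Finset.range (lam.parts 0), nupConj lam mu n i

/-- The width `W(λ/μ) = max_i (λ_i - μ_i)`. -/
def skewWidth (lam mu : NatPartition) : ℕ :=
  lam.parts.support.sup fun i => lam.parts i - mu.parts i

/-- The height `H(λ/μ) = max_i (λ̃_i - μ̃_i)`. -/
def skewHeight (lam mu : NatPartition) : ℕ :=
  (Finset.range (lam.parts 0)).sup fun i => lam.conj i - mu.conj i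

/-- Containment `ν'(λ,μ,a) ⊆ ν''(λ,μ,b)` (partwise inequality). -/
def nupSubNupp (lam mu : NatPartition) (a b : ℤ) : Prop :=
  ∀ i, nupParts lam mu a i ≤ nuppParts lam mu b i

/-- The set of which the threshold number `T_{λ/μ}(f,g)` is the greatest element. -/
def threshSet (lam mu : NatPartition) (f g : ℤ) : Set ℤ :=
  {t : ℤ | nupSubNupp lam mu (f - t) (g - t)}

lemma lower_card_mem (s : Finset ℕ) (hs : ∀ ⦃i j : ℕ⦄, i ≤ j → j ∈ s → i ∈ s) (i : ℕ) :
    i + 1 ≤ s.card ↔ i ∈ s := by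
  constructor
  · intro h
    by_contra hi
    have hsubr : s ⊆ Finset.range i := by
      intro j hj
      simp only [Finset.mem_range]
      by_contra hij
      exact hi (hs (le_of_not_gt hij) hj)
    have := Finset.card_le_card hsubr
    simp only [Finset.card_range] at this
    omega
  · intro h
    have hsubr : Finset.range (i + 1) ⊆ s := by
      intro j hj
      simp only [Finset.mem_range] at hj
      exact hs (by omega) h
    simpa using Finset.card_le_card hsubr

lemma conj_galois (p : NatPartition) (i j : ℕ) :
    i + 1 ≤ p.conj j ↔ j + 1 ≤ p.parts i := by
  unfold NatPartition.conj
  rw [lower_card_mem]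
  · simp only [Finset.mem_filter, Finsupp.mem_support_iff]
    constructor
    · exact fun h => h.2
    · intro h; exact ⟨by omega, h⟩
  · intro a b hab hb
    simp only [Finset.mem_filter, Finsupp.mem_support_iff] at *
    have := p.antitone hab
    exact ⟨by omega, by omega⟩

lemma conj_antitone (p : NatPartition) {i j : ℕ} (h : i ≤ j) : p.conj j ≤ p.conj i := by
  rcases Nat.eq_zero_or_pos (p.conj j) with h0 | h0
  · omega
  · have h1 : (p.conj j - 1) + 1 ≤ p.conj j := by omega
    rw [conj_galois] at h1
    have h2 : i + 1 ≤ p.parts (p.conj j - 1) := by omega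
    rw [← conj_galois] at h2
    omega

lemma conj_mono {lam mu : NatPartition} (hsub : ∀ i, mu.parts i ≤ lam.parts i) (j : ℕ) :
    mu.conj j ≤ lam.conj j := by
  rcases Nat.eq_zero_or_pos (mu.conj j) with h0 | h0
  · omega
  · have h1 : (mu.conj j - 1) + 1 ≤ mu.conj j := by omega
    rw [conj_galois] at h1
    have h2 : j + 1 ≤ lam.parts (mu.conj j - 1) := le_trans h1 (hsub _)
    rw [← conj_galois] at h2
    omega

lemma conj_eq_zero (lam : NatPartition) {j : ℕ} (h : lam.parts 0 ≤ j) : lam.conj j = 0 := by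
  by_contra h0
  have h1 : 0 + 1 ≤ lam.conj j := by omega
  rw [conj_galois] at h1
  have := lam.antitone (Nat.zero_le 0)
  omega

lemma nupConj_eq {lam mu : NatPartition} (hsub : ∀ i, mu.parts i ≤ lam.parts i)
    (a : ℤ) (j : ℕ) : nupConj lam mu a j = max (mu.conj j) (lam.conj j - a.toNat) := by
  have := conj_mono hsub j
  unfold nupConj
  omega

lemma nup_galois {lam mu : NatPartition} (hsub : ∀ i, mu.parts i ≤ lam.parts i)
    (a : ℤ) (i j : ℕ) : j + 1 ≤ nupParts lam mu a i ↔ i + 1 ≤ nupConj lam mu a j := by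
  unfold nupParts
  rw [lower_card_mem]
  · simp only [Finset.mem_filter, Finset.mem_range]
    constructor
    · exact fun h => h.2
    · intro h
      refine ⟨?_, h⟩
      by_contra hj
      have hz : lam.conj j = 0 := conj_eq_zero lam (by omega)
      have hmz : mu.conj j ≤ lam.conj j := conj_mono hsub j
      rw [nupConj_eq hsub] at h
      omega
  · intro x y hxy hy
    simp only [Finset.mem_filter, Finset.mem_range] at *
    rw [nupConj_eq hsub] at *
    have h1 := conj_antitone mu hxy
    have h2 := conj_antitone lam hxy
    exact ⟨by omega, by omega⟩

lemma mem_thresh_iff {lam mu : NatPartition} (hsub : ∀ i, mu.parts i ≤ lam.parts i)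
    (f t : ℤ) (ht : 0 ≤ t) :
    t ∈ threshSet lam mu f 0 ↔ skewHeight lam mu ≤ (f - t).toNat := by
  have h1 : ∀ i, nuppParts lam mu (0 - t) i = mu.parts i := by
    intro i
    have := hsub i
    unfold nuppParts
    omega
  have step1 : t ∈ threshSet lam mu f 0 ↔ ∀ i, nupParts lam mu (f - t) i ≤ mu.parts i := by
    simp only [threshSet, Set.mem_setOf_eq, nupSubNupp, h1]
  have step2 : (∀ i, nupParts lam mu (f - t) i ≤ mu.parts i) ↔
      ∀ j, nupConj lam mu (f - t) j ≤ mu.conj j := by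
    constructor
    · intro h j
      by_contra hc
      have h2 : (mu.conj j) + 1 ≤ nupConj lam mu (f - t) j := by omega
      rw [← nup_galois hsub] at h2
      have h3 := le_trans h2 (h _)
      rw [← conj_galois] at h3
      omega
    · intro h i
      by_contra hc
      have h2 : (mu.parts i) + 1 ≤ nupParts lam mu (f - t) i := by omega
      rw [nup_galois hsub] at h2
      have h3 := le_trans h2 (h _)
      rw [conj_galois] at h3
      omega
  have step3 : (∀ j, nupConj lam mu (f - t) j ≤ mu.conj j) ↔
      skewHeight lam mu ≤ (f - t).toNat := by
    unfold skewHeight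
    rw [Finset.sup_le_iff]
    constructor
    · intro h j hj
      have := h j
      rw [nupConj_eq hsub] at this
      omega
    · intro h j
      rw [nupConj_eq hsub]
      rcases le_or_gt (lam.parts 0) j with hj | hj
      · have hz : lam.conj j = 0 := conj_eq_zero lam hj
        have := conj_mono hsub j
        omega
      · have := h j (Finset.mem_range.mpr hj)
        omega
  rw [step1, step2, step3]

/-- Either `T_{λ/μ}(f,0) < 0` or `T_{λ/μ}(f,0) = f - H(λ/μ) ≥ 0`. -/
theorem stmt11 (lam mu : NatPartition) (hsub : ∀ i, mu.parts i ≤ lam.parts i)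
    (f T : ℤ) (hT : IsGreatest (threshSet lam mu f 0) T) :
    T < 0 ∨ (T = f - (skewHeight lam mu : ℤ) ∧ 0 ≤ T) := by
  by_cases hT0 : T < 0
  · exact Or.inl hT0
  right
  have hT0' : 0 ≤ T := by omega
  have hmem := hT.1
  have hub := hT.2
  by_cases hH : skewHeight lam mu = 0
  · exfalso
    have hm : T + 1 ∈ threshSet lam mu f 0 :=
      (mem_thresh_iff hsub f (T + 1) (by omega)).2 (by omega)
    have := hub hm
    omega
  · have hTm : skewHeight lam mu ≤ (f - T).toNat := (mem_thresh_iff hsub f T hT0').1 hmem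
    have h1 : (skewHeight lam mu : ℤ) ≤ f - T := by omega
    have h2 : f - (skewHeight lam mu : ℤ) ∈ threshSet lam mu f 0 :=
      (mem_thresh_iff hsub f _ (by omega)).2 (by omega)
    have := hub h2
    constructor <;> omega
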